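/- For all n ≥ 2 in ℕ, the plethysm h₂[hₙ] of symmetric functions satisfies h₂[hₙ] = Σ_{k=0}^{⌊n/2⌋} s_{(2n−2k, 2k)}, where s_μ denotes the Schur function indexed by μ. -/

import Mathlib

section

open PowerSeries Finset

variable {R : Type*} [CommRing R]

lemma geom_inv (a : R) :
    (1 - PowerSeries.C (R := R) a * PowerSeries.X) * PowerSeries.mk (fun k => a ^ k) = 1 := by
  ext n
  cases n with
  | zero => simp
  | succ n =>
    rw [sub_mul, one_mul, map_sub, mul_assoc, coeff_C_mul, coeff_succ_X_mul]
    simp [pow_succ, mul_comm]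




open MvPolynomial in
lemma prod_geom {σ : Type*} [Fintype σ] [DecidableEq σ] (Rq : Type*) [CommRing Rq] [Nontrivial Rq] :
    (∏ i : σ, PowerSeries.mk (fun k => (MvPolynomial.X i : MvPolynomial σ Rq) ^ k)) =
      PowerSeries.mk (fun k => hsymm σ Rq k) := by
  apply PowerSeries.ext; intro d
  rw [PowerSeries.coeff_prod, coeff_mk, hsymm]
  refine Finset.sum_bij' (i := fun l hl => (⟨l.toMultiset, by
      rw [Finsupp.card_toMultiset, Finsupp.sum_fintype _ (fun _ x => id x) (fun _ => rfl)]
      exact (Finset.mem_finsuppAntidiag.mp hl).1⟩ : Sym σ d))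
    (j := fun s _ => s.1.toFinsupp) ?_ ?_ ?_ ?_ ?_
  · intro l hl; exact Finset.mem_univ _
  · intro s hs
    rw [Finset.mem_finsuppAntidiag]
    refine ⟨?_, Finset.subset_univ _⟩
    calc Finset.univ.sum ⇑(s.1.toFinsupp) = (s.1.toFinsupp).sum (fun _ x => x) :=
          (Finsupp.sum_fintype _ (fun _ x => x) (fun _ => rfl)).symm
      _ = (s.1.toFinsupp).toMultiset.card := (Finsupp.card_toMultiset _).symm
      _ = s.1.card := by rw [Multiset.toFinsupp_toMultiset]
      _ = d := s.2
  · intro l hl; simp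
  · intro s hs; exact Subtype.ext (by simp)
  · intro l hl
    simp only [coeff_mk]
    calc (∏ i : σ, MvPolynomial.X i ^ l i : MvPolynomial σ Rq)
        = l.prod (fun i n => MvPolynomial.X i ^ n) := (Finsupp.prod_fintype _ _ (by simp)).symm
      _ = (Finsupp.mapDomain MvPolynomial.X l).prod (fun a n => a ^ n) :=
          (Finsupp.prod_mapDomain_index_inj (MvPolynomial.X_injective)).symm
      _ = (Finsupp.mapDomain MvPolynomial.X l).toMultiset.prod := Finsupp.prod_toMultiset _ |>.symm
      _ = (Multiset.map MvPolynomial.X l.toMultiset).prod := by rw [Finsupp.toMultiset_map]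

/-- The embedding `(a,b) ↦ (2a,2b)`. -/
def dblEmb : ℕ × ℕ ↪ ℕ × ℕ := ⟨fun p => (2 * p.1, 2 * p.2), by
  intro p q h
  have h1 := congrArg Prod.fst h
  have h2 := congrArg Prod.snd h
  simp at h1 h2
  exact Prod.ext h1 h2⟩

lemma dblEmb_apply (p : ℕ × ℕ) : dblEmb p = (2 * p.1, 2 * p.2) := rfl

/-- Substitution `t ↦ t²` on power series, as a ring hom. -/
noncomputable def sq2 : PowerSeries R →+* PowerSeries R where
  toFun f := PowerSeries.mk fun m => if m % 2 = 0 then PowerSeries.coeff (R := R) (m / 2) f else 0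
  map_zero' := by ext m; simp
  map_add' f g := by
    ext m
    simp only [PowerSeries.coeff_mk, map_add]
    split <;> simp
  map_one' := by
    ext m
    simp only [PowerSeries.coeff_mk, PowerSeries.coeff_one]
    rcases Nat.eq_zero_or_pos m with rfl | hm
    · simp
    · have : ¬ m = 0 := by omega
      simp only [this, if_false]
      split
      · rename_i he
        have : ¬ m / 2 = 0 := by omega
        simp [this]
      · rfl
  map_mul' f g := by
    ext m
    simp only [PowerSeries.coeff_mk, PowerSeries.coeff_mul]
    rcases Nat.even_or_odd m with ⟨q, hq⟩ | ⟨q, hq⟩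
    · subst hq
      have hm2 : (q + q) % 2 = 0 := by omega
      have hd2 : (q + q) / 2 = q := by omega
      rw [if_pos hm2, hd2]
      have hsub : (Finset.HasAntidiagonal.antidiagonal q).map dblEmb ⊆ Finset.HasAntidiagonal.antidiagonal (q + q) := by
        intro p hp
        rw [Finset.mem_map] at hp
        obtain ⟨⟨a, b⟩, hab, rfl⟩ := hp
        rw [Finset.HasAntidiagonal.mem_antidiagonal] at hab ⊢
        simp only [dblEmb_apply, Function.Embedding.coeFn_mk]
        omega
      have hzero : ∀ p ∈ Finset.HasAntidiagonal.antidiagonal (q + q),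
          p ∉ (Finset.HasAntidiagonal.antidiagonal q).map dblEmb →
          (if p.1 % 2 = 0 then PowerSeries.coeff (R := R) (p.1/2) f else 0) *
          (if p.2 % 2 = 0 then PowerSeries.coeff (R := R) (p.2/2) g else 0) = 0 := by
        intro p hp hnp
        rw [Finset.HasAntidiagonal.mem_antidiagonal] at hp
        by_cases h1 : p.1 % 2 = 0
        · exfalso
          apply hnp
          rw [Finset.mem_map]
          refine ⟨(p.1 / 2, p.2 / 2), ?_, ?_⟩
          · rw [Finset.HasAntidiagonal.mem_antidiagonal]; omega
          · simp only [dblEmb_apply, Function.Embedding.coeFn_mk]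
            have : p.2 % 2 = 0 := by omega
            exact Prod.ext (by omega) (by omega)
        · rw [if_neg h1, zero_mul]
      calc ∑ p ∈ Finset.HasAntidiagonal.antidiagonal q, PowerSeries.coeff (R := R) p.1 f * PowerSeries.coeff (R := R) p.2 g
          = ∑ p ∈ (Finset.HasAntidiagonal.antidiagonal q).map dblEmb,
            ((if p.1 % 2 = 0 then PowerSeries.coeff (R := R) (p.1/2) f else 0) *
             (if p.2 % 2 = 0 then PowerSeries.coeff (R := R) (p.2/2) g else 0)) := by
            rw [Finset.sum_map]
            refine Finset.sum_congr rfl fun p hp => ?_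
            simp [dblEmb_apply, Nat.mul_div_cancel_left]
        _ = _ := Finset.sum_subset hsub hzero
    · subst hq
      have hm2 : ¬ (2 * q + 1) % 2 = 0 := by omega
      rw [if_neg hm2]
      refine (Finset.sum_eq_zero ?_).symm
      intro p hp
      rw [Finset.HasAntidiagonal.mem_antidiagonal] at hp
      by_cases h1 : p.1 % 2 = 0
      · have : ¬ p.2 % 2 = 0 := by omega
        rw [if_neg this, mul_zero]
      · rw [if_neg h1, zero_mul]

lemma sq2_C (a : R) : sq2 (PowerSeries.C (R := R) a) = PowerSeries.C (R := R) a := by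
  ext m
  simp only [sq2, RingHom.coe_mk, MonoidHom.coe_mk, OneHom.coe_mk, PowerSeries.coeff_mk,
    PowerSeries.coeff_C]
  rcases Nat.eq_zero_or_pos m with rfl | hm
  · simp
  · have h0 : ¬ m = 0 := by omega
    simp only [h0, if_false]
    split
    · have : ¬ m / 2 = 0 := by omega
      simp [this]
    · rfl

lemma sq2_X : (sq2 : PowerSeries R →+* PowerSeries R) PowerSeries.X = PowerSeries.X ^ 2 := by
  ext m
  simp only [sq2, RingHom.coe_mk, MonoidHom.coe_mk, OneHom.coe_mk, PowerSeries.coeff_mk,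
    PowerSeries.coeff_X, PowerSeries.coeff_X_pow]
  split_ifs <;> first | rfl | (exfalso; omega)

lemma rescale_neg_one_C_mul_X (a : R) :
    PowerSeries.rescale (-1) (PowerSeries.C (R := R) a * PowerSeries.X) =
      -(PowerSeries.C (R := R) a * PowerSeries.X) := by
  ext n
  simp only [PowerSeries.coeff_rescale, map_neg, PowerSeries.coeff_C_mul, PowerSeries.coeff_X,
    mul_ite, mul_one, mul_zero]
  by_cases h : n = 1
  · subst h; simp
  · simp [h]

open MvPolynomial in
lemma key (N n : ℕ) :
    (bind₁ (fun i : Fin N => (X i : MvPolynomial (Fin N) ℚ) ^ 2)) (hsymm (Fin N) ℚ n) =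
    ∑ p ∈ Finset.HasAntidiagonal.antidiagonal (2 * n),
      hsymm (Fin N) ℚ p.1 * ((-1) ^ p.2 * hsymm (Fin N) ℚ p.2) := by
  set Rr := MvPolynomial (Fin N) ℚ
  set φ : Rr →+* Rr := (bind₁ (fun i : Fin N => (X i : Rr) ^ 2)).toRingHom with hφ
  set h : ℕ → Rr := fun k => hsymm (Fin N) ℚ k with hh
  set H : PowerSeries Rr := PowerSeries.mk h with hH
  set Hneg : PowerSeries Rr := PowerSeries.mk (fun k => (-1) ^ k * h k) with hHneg
  set G : PowerSeries Rr :=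
    PowerSeries.mk (fun m => if m % 2 = 0 then φ (h (m / 2)) else 0) with hG
  set E : PowerSeries Rr := ∏ i : Fin N, (1 - PowerSeries.C (R := Rr) (X i) * PowerSeries.X) with hE
  set Eneg : PowerSeries Rr :=
    ∏ i : Fin N, (1 + PowerSeries.C (R := Rr) (X i) * PowerSeries.X) with hEneg
  set D : PowerSeries Rr :=
    ∏ i : Fin N, (1 - PowerSeries.C (R := Rr) ((X i : Rr) ^ 2) * PowerSeries.X ^ 2) with hD
  have hEH : E * H = 1 := by
    rw [hE, hH, hh, ← prod_geom (σ := Fin N) ℚ, ← Finset.prod_mul_distrib]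
    exact Finset.prod_eq_one fun i _ => geom_inv _
  have hEnegHneg : Eneg * Hneg = 1 := by
    have h2 := congrArg (PowerSeries.rescale (-1 : Rr)) hEH
    rw [map_mul, map_one, map_prod] at h2
    have e1 : ∀ i : Fin N, PowerSeries.rescale (-1 : Rr)
        (1 - PowerSeries.C (R := Rr) (X i) * PowerSeries.X) =
        1 + PowerSeries.C (R := Rr) (X i) * PowerSeries.X := by
      intro i
      rw [map_sub, map_one, rescale_neg_one_C_mul_X, sub_neg_eq_add]
    have e2 : PowerSeries.rescale (-1 : Rr) H = Hneg := by
      rw [hH, PowerSeries.rescale_mk, hHneg]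
    rw [Finset.prod_congr rfl (fun i _ => e1 i), e2] at h2
    exact h2
  have hDU : D * (H * Hneg) = 1 := by
    have hEE : E * Eneg = D := by
      rw [hE, hEneg, hD, ← Finset.prod_mul_distrib]
      refine Finset.prod_congr rfl fun i _ => ?_
      rw [map_pow (PowerSeries.C (R := Rr))]
      ring
    calc D * (H * Hneg) = (E * H) * (Eneg * Hneg) := by rw [← hEE]; ring
      _ = 1 := by rw [hEH, hEnegHneg, mul_one]
  have hDG : D * G = 1 := by
    have h3 := congrArg (PowerSeries.map φ) hEH
    rw [map_mul, map_one, map_prod] at h3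
    have e3 : ∀ i : Fin N, PowerSeries.map φ
        (1 - PowerSeries.C (R := Rr) (X i) * PowerSeries.X) =
        1 - PowerSeries.C (R := Rr) ((X i : Rr) ^ 2) * PowerSeries.X := by
      intro i
      rw [map_sub, map_one, map_mul, PowerSeries.map_C, PowerSeries.map_X]
      have : φ (MvPolynomial.X i) = (MvPolynomial.X i : Rr) ^ 2 := by
        rw [hφ]; exact bind₁_X_right _ i
      rw [this]
    have e4 : PowerSeries.map φ H = PowerSeries.mk fun k => φ (h k) := by
      ext m; simp [hH]
    rw [Finset.prod_congr rfl (fun i _ => e3 i), e4] at h3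
    have h4 := congrArg (sq2 (R := Rr)) h3
    rw [map_mul, map_one, map_prod] at h4
    have e5 : ∀ i : Fin N, sq2 (1 - PowerSeries.C (R := Rr) ((X i : Rr) ^ 2) * PowerSeries.X) =
        1 - PowerSeries.C (R := Rr) ((X i : Rr) ^ 2) * PowerSeries.X ^ 2 := by
      intro i
      rw [map_sub, map_one, map_mul, sq2_C, sq2_X]
    have e6 : sq2 (PowerSeries.mk fun k => φ (h k)) = G := by
      ext m
      simp only [sq2, RingHom.coe_mk, MonoidHom.coe_mk, OneHom.coe_mk, PowerSeries.coeff_mk, hG]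
    rw [Finset.prod_congr rfl (fun i _ => e5 i), e6] at h4
    exact h4
  have hUG : H * Hneg = G := by
    calc H * Hneg = (H * Hneg) * (D * G) := by rw [hDG, mul_one]
      _ = G * (D * (H * Hneg)) := by ring
      _ = G := by rw [hDU, mul_one]
  have := congrArg (PowerSeries.coeff (R := Rr) (2 * n)) hUG
  rw [PowerSeries.coeff_mul] at this
  simp only [hH, hHneg, hG, PowerSeries.coeff_mk] at this
  have hmod : (2 * n) % 2 = 0 := by omega
  have hdiv : (2 * n) / 2 = n := by omega
  rw [if_pos hmod, hdiv] at this
  exact this.symm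

lemma neg_one_pow_congr' {a b : ℕ} (h : a % 2 = b % 2) : ((-1 : R) ^ a = (-1) ^ b) := by
  rcases Nat.even_or_odd a with ha | ha
  · have ha' := Nat.even_iff.mp ha
    rw [ha.neg_one_pow, (Nat.even_iff.mpr (by omega : b % 2 = 0)).neg_one_pow]
  · have ha' := Nat.odd_iff.mp ha
    rw [ha.neg_one_pow, (Nat.odd_iff.mpr (by omega : b % 2 = 1)).neg_one_pow]

lemma sum_range_pair {M : Type*} [AddCommMonoid M] (f : ℕ → M) (m : ℕ) :
    ∑ j ∈ Finset.range (2 * m), f j = ∑ k ∈ Finset.range m, (f (2 * k) + f (2 * k + 1)) := by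
  induction m with
  | zero => simp
  | succ m ih =>
    rw [Finset.sum_range_succ, ← ih, show 2 * (m + 1) = (2 * m) + 1 + 1 by omega,
      Finset.sum_range_succ, Finset.sum_range_succ]
    rw [add_assoc]

end

open MvPolynomial

/-- The complete homogeneous symmetric polynomial `h_k` in `N` variables over `ℚ`. -/
noncomputable def hPoly (N k : ℕ) : MvPolynomial (Fin N) ℚ := hsymm (Fin N) ℚ k

/-- Plethysm by `h₂`: since `h₂ = (p₁² + p₂)/2`, for a symmetric polynomial `f`
we have `h₂[f] = (f² + f(x₁², x₂², …))/2`. -/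
noncomputable def plethH2 {N : ℕ} (f : MvPolynomial (Fin N) ℚ) : MvPolynomial (Fin N) ℚ :=
  C (1 / 2 : ℚ) * (f ^ 2 + bind₁ (fun i : Fin N => (X i : MvPolynomial (Fin N) ℚ) ^ 2) f)

/-- The Schur polynomial of the two-row partition `(a, b)` (with `a ≥ b`), via the
Jacobi–Trudi identity `s_{(a,b)} = h_a h_b - h_{a+1} h_{b-1}` (and `s_{(a,0)} = h_a`). -/
noncomputable def schurTwoRow (N a b : ℕ) : MvPolynomial (Fin N) ℚ :=
  if b = 0 then hPoly N a
  else hPoly N a * hPoly N b - hPoly N (a + 1) * hPoly N (b - 1)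

theorem h2_plethysm_hn (N n : ℕ) (hn : 2 ≤ n) :
    plethH2 (hPoly N n) =
      ∑ k ∈ Finset.range (n / 2 + 1), schurTwoRow N (2 * n - 2 * k) (2 * k) := by
  classical
  set g : ℕ → MvPolynomial (Fin N) ℚ :=
    fun j => (-1) ^ j * hsymm (Fin N) ℚ j * hsymm (Fin N) ℚ (2 * n - j) with hg
  have hkey : (bind₁ fun i : Fin N => (X i : MvPolynomial (Fin N) ℚ) ^ 2) (hsymm (Fin N) ℚ n)
      = ∑ j ∈ Finset.range (2 * n + 1), g j := by
    rw [key, Finset.Nat.sum_antidiagonal_eq_sum_range_succ_mk]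
    refine Finset.sum_congr rfl fun j hj => ?_
    rw [Finset.mem_range] at hj
    simp only [hg]
    rw [show ((-1 : MvPolynomial (Fin N) ℚ)) ^ (2*n - j) = (-1)^j from
      neg_one_pow_congr' (by omega)]
    ring
  have hgsymm : ∀ j, j ≤ 2*n → g j = g (2*n - j) := by
    intro j hj
    simp only [hg]
    rw [show 2*n - (2*n - j) = j by omega,
      neg_one_pow_congr' (show j % 2 = (2*n - j) % 2 by omega)]
    ring
  set m := n / 2 with hm
  set T := ∑ j ∈ Finset.range (2 * m + 1), g j with hT
  have hrefl : ∑ j ∈ Finset.range (2*n+1), g j = 2 * T - hsymm (Fin N) ℚ n ^ 2 := by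
    rcases Nat.even_or_odd n with ⟨q, hq⟩ | ⟨q, hq⟩
    · have h1 : 2*n + 1 = (2*m + 1) + 2*m := by omega
      rw [h1, Finset.sum_range_add]
      have h2 : ∀ j ∈ Finset.range (2*m), g (2*m + 1 + j) = g (2*m - 1 - j) := by
        intro j hj
        rw [Finset.mem_range] at hj
        rw [hgsymm (2*m+1+j) (by omega), show 2*n - (2*m+1+j) = 2*m - 1 - j by omega]
      rw [Finset.sum_congr rfl h2, Finset.sum_range_reflect (f := g)]
      have h3 : ∑ j ∈ Finset.range (2*m), g j = T - g (2*m) := by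
        rw [hT, Finset.sum_range_succ]; ring
      have h4 : g (2*m) = hsymm (Fin N) ℚ n ^ 2 := by
        simp only [hg]
        rw [show 2*m = n by omega, show 2*n - n = n by omega,
          Even.neg_one_pow ⟨q, by omega⟩]
        ring
      rw [h3, h4]; ring
    · have h1 : 2*n + 1 = (2*m + 1) + (2*m + 2) := by omega
      rw [h1, Finset.sum_range_add]
      have h2 : ∀ j ∈ Finset.range (2*m+2), g (2*m + 1 + j) = g (2*m + 2 - 1 - j) := by
        intro j hj
        rw [Finset.mem_range] at hj
        rw [hgsymm (2*m+1+j) (by omega), show 2*n - (2*m+1+j) = 2*m+2-1-j by omega]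
      rw [Finset.sum_congr rfl h2, Finset.sum_range_reflect (f := g)]
      have h3 : ∑ j ∈ Finset.range (2*m+2), g j = T + g (2*m+1) := by
        rw [hT, Finset.sum_range_succ]
      have h4 : g (2*m+1) = -(hsymm (Fin N) ℚ n ^ 2) := by
        simp only [hg]
        rw [show 2*m+1 = n by omega, show 2*n - n = n by omega,
          Odd.neg_one_pow ⟨m, by omega⟩]
        ring
      rw [h3, h4]; ring
  have hS : ∑ k ∈ Finset.range (m + 1), schurTwoRow N (2*n - 2*k) (2*k) = T := by
    rw [hT, Finset.sum_range_succ' (fun k => schurTwoRow N (2*n - 2*k) (2*k)) m,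
      Finset.sum_range_succ' g (2*m), sum_range_pair (fun j => g (j+1)) m]
    have hzero : schurTwoRow N (2*n - 2*0) (2*0) = g 0 := by
      simp [schurTwoRow, hPoly, hg, hsymm_zero]
    have hterm : ∀ k ∈ Finset.range m,
        schurTwoRow N (2*n - 2*(k+1)) (2*(k+1)) = g (2*k+1) + g (2*k+2) := by
      intro k hk
      rw [Finset.mem_range] at hk
      have hkn : 2*(k+1) ≤ n := by omega
      simp only [schurTwoRow, hPoly, hg]
      rw [if_neg (by omega : ¬ 2*(k+1) = 0)]
      rw [show 2*n - 2*(k+1) + 1 = 2*n - (2*k+1) by omega,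
        show 2*(k+1) - 1 = 2*k+1 by omega,
        show 2*(k+1) = 2*k+2 by omega]
      rw [Odd.neg_one_pow (⟨k, by omega⟩ : Odd (2*k+1)),
        Even.neg_one_pow (⟨k+1, by omega⟩ : Even (2*k+2))]
      ring
    rw [Finset.sum_congr rfl hterm, hzero]
  rw [hS]
  simp only [plethH2, hPoly]
  rw [hkey, hrefl]
  have h2T : hsymm (Fin N) ℚ n ^ 2 + (2 * T - hsymm (Fin N) ℚ n ^ 2) = 2 * T := by ring
  rw [h2T]
  have hC2 : (C (1/2 : ℚ) : MvPolynomial (Fin N) ℚ) * 2 = 1 := by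
    rw [show (2 : MvPolynomial (Fin N) ℚ) = C (2 : ℚ) from (map_ofNat (MvPolynomial.C : ℚ →+* MvPolynomial (Fin N) ℚ) 2).symm, ← C_mul]
    norm_num
  calc C (1/2 : ℚ) * (2 * T) = (C (1/2 : ℚ) * 2) * T := by ring
    _ = T := by rw [hC2, one_mul]
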